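/- Let φ : [−1,1] → ℝ be continuous with φ(−1) = −1, φ(1) = 1, −1 < φ(ŷ) < 1 for all ŷ ∈ (−1,1), and φ differentiable on (−1,1) with φ'(ŷ) > 0 there. Let a, b ∈ ℝ with a·b < 0. Then: (i) there exists a unique ŷ ∈ (−1,1) with a(1+φ(ŷ)) + b(1−φ(ŷ)) = 0, and it satisfies φ(ŷ) = (a+b)/(b−a); (ii) the derivative at this ŷ of the map ŷ ↦ a(1+φ(ŷ)) + b(1−φ(ŷ)) equals φ'(ŷ)·(a−b), which is negative if a < 0 < b and positive if b < 0 < a; (iii) (1+φ(ŷ))/2 = b/(b−a), so that for all c₁, c₂ ∈ ℝ one has (c₁(1+φ(ŷ)) + c₂(1−φ(ŷ)))/2 = σc₁ + (1−σ)c₂ where σ = b/(b−a) is the Filippov convex coefficient. -/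

import Mathlib

/-- Pointwise content of Theorem 4.1: for a Sotomayor–Teixeira regularization function φ
and `a·b < 0`, the layer equation `a(1+φ(ŷ)) + b(1−φ(ŷ)) = 0` has a unique equilibrium
`ŷ ∈ (−1,1)`, with `φ(ŷ) = (a+b)/(b−a)`; the layer linearization there is `φ'(ŷ)(a−b)`,
negative for stable sliding `a < 0 < b` and positive for `b < 0 < a`; and the reduced
flow coincides with the Filippov convex combination with `σ = b/(b−a)`. -/
theorem critical_manifold_layer_equilibrium
    (φ φ' : ℝ → ℝ)
    (hcont : ContinuousOn φ (Set.Icc (-1) 1))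
    (hφm : φ (-1) = -1) (hφp : φ 1 = 1)
    (hrange : ∀ y ∈ Set.Ioo (-1 : ℝ) 1, -1 < φ y ∧ φ y < 1)
    (hderiv : ∀ y ∈ Set.Ioo (-1 : ℝ) 1, HasDerivAt φ (φ' y) y)
    (hpos : ∀ y ∈ Set.Ioo (-1 : ℝ) 1, 0 < φ' y)
    (a b : ℝ) (hab : a * b < 0) :
    ∃ y ∈ Set.Ioo (-1 : ℝ) 1,
      a * (1 + φ y) + b * (1 - φ y) = 0 ∧
      φ y = (a + b) / (b - a) ∧
      (∀ z ∈ Set.Ioo (-1 : ℝ) 1, a * (1 + φ z) + b * (1 - φ z) = 0 → z = y) ∧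
      HasDerivAt (fun z => a * (1 + φ z) + b * (1 - φ z)) (φ' y * (a - b)) y ∧
      (a < 0 → 0 < b → φ' y * (a - b) < 0) ∧
      (b < 0 → 0 < a → 0 < φ' y * (a - b)) ∧
      (1 + φ y) / 2 = b / (b - a) ∧
      (∀ c₁ c₂ : ℝ, (c₁ * (1 + φ y) + c₂ * (1 - φ y)) / 2
        = (b / (b - a)) * c₁ + (1 - b / (b - a)) * c₂) := by
  -- a and b have opposite signs
  have hcase : (a < 0 ∧ 0 < b) ∨ (b < 0 ∧ 0 < a) := by
    rcases mul_neg_iff.mp hab with ⟨ha, hb⟩ | ⟨ha, hb⟩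
    · exact Or.inr ⟨hb, ha⟩
    · exact Or.inl ⟨ha, hb⟩
  have hba : b - a ≠ 0 := by rcases hcase with ⟨h1, h2⟩ | ⟨h1, h2⟩ <;> intro h <;> nlinarith
  set t : ℝ := (a + b) / (b - a) with ht
  have htlt : -1 < t ∧ t < 1 := by
    rcases hcase with ⟨h1, h2⟩ | ⟨h1, h2⟩
    · have hpos' : 0 < b - a := by linarith
      constructor
      · rw [ht, lt_div_iff₀ hpos']; nlinarith
      · rw [ht, div_lt_iff₀ hpos']; nlinarith
    · have hneg : b - a < 0 := by linarith
      constructor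
      · rw [ht, lt_div_iff_of_neg hneg]; nlinarith
      · rw [ht, div_lt_iff_of_neg hneg]; nlinarith
  -- intermediate value theorem
  have h12 : (-1 : ℝ) ≤ 1 := by norm_num
  have hIVT : t ∈ Set.Icc (φ (-1)) (φ 1) := by
    rw [hφm, hφp]; exact ⟨le_of_lt htlt.1, le_of_lt htlt.2⟩
  obtain ⟨y, hyIcc, hyt⟩ := intermediate_value_Icc h12 hcont hIVT
  have hyIoo : y ∈ Set.Ioo (-1 : ℝ) 1 := by
    rcases hyIcc with ⟨h1, h2⟩
    constructor
    · rcases lt_or_eq_of_le h1 with h | h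
      · exact h
      · exfalso; rw [← h, hφm] at hyt; rw [← hyt] at htlt; exact lt_irrefl _ htlt.1
    · rcases lt_or_eq_of_le h2 with h | h
      · exact h
      · exfalso; rw [h, hφp] at hyt; rw [← hyt] at htlt; exact lt_irrefl _ htlt.2
  -- strict monotonicity for uniqueness
  have hmono : StrictMonoOn φ (Set.Icc (-1 : ℝ) 1) := by
    apply StrictMonoOn.mono (s := Set.Icc (-1 : ℝ) 1) ?_ (le_refl _)
    apply strictMonoOn_of_deriv_pos (convex_Icc _ _) hcont
    intro x hx
    rw [interior_Icc] at hx
    rw [(hderiv x hx).deriv]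
    exact hpos x hx
  -- the equation is equivalent to φ z = t
  have heq : ∀ z, a * (1 + φ z) + b * (1 - φ z) = 0 ↔ φ z = t := by
    intro z
    rw [ht]
    rw [eq_div_iff hba]
    constructor <;> intro h <;> nlinarith
  refine ⟨y, hyIoo, (heq y).mpr hyt, hyt, ?_, ?_, ?_, ?_, ?_, ?_⟩
  · intro z hz h
    have hzt : φ z = t := (heq z).mp h
    exact hmono.injOn (Set.mem_Icc_of_Ioo hz) (Set.mem_Icc_of_Ioo hyIoo) (hzt.trans hyt.symm)
  · have h := hderiv y hyIoo
    have key : (fun z => a * (1 + φ z) + b * (1 - φ z))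
        = fun z => (a + b) + (a * φ z - b * φ z) := by funext z; ring
    rw [key]
    have := (((h.const_mul a).sub (h.const_mul b)).const_add (a + b))
    exact this.congr_deriv (by ring)
  · intro ha hb; have := hpos y hyIoo; nlinarith
  · intro hb ha; have := hpos y hyIoo; nlinarith
  · rw [hyt, ht]; field_simp; ring
  · intro c₁ c₂; rw [hyt, ht]; field_simp; ring
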